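/- Let a and b be coprime integers with a ≥ 2 and b ≥ 2, let k ≥ 1 be an integer, and let A_k(a,b) = {a^(k−i) · b^i : 0 ≤ i ≤ k} be the geometric sequence of generators. Define σ_r(a,b) = Σ_{i=0}^{r} a^(r−i) · b^i. Then the Frobenius number of the numerical semigroup ⟨A_k(a,b)⟩ is F = σ_{k+1}(a,b) − σ_k(a,b) − (a^(k+1) + b^(k+1)) (Tripathi's formula). -/

import Mathlib

/-- The sum `σ_r(a,b) = Σ_{i=0}^{r} a^(r-i) * b^i` of the geometric progression. -/
def sigma (a b r : ℕ) : ℕ := ∑ i ∈ Finset.range (r + 1), a ^ (r - i) * b ^ i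

namespace TripAux

def S (a b k : ℕ) : AddSubmonoid ℕ :=
  AddSubmonoid.closure {x : ℕ | ∃ i ≤ k, x = a ^ (k - i) * b ^ i}

/-- The top digit of `n` in the canonical expansion at level `k`. -/
def dgt (a b k : ℕ) (n : ℤ) : ℕ := ((n : ZMod a) * ((b : ZMod a)⁻¹) ^ k).val

/-- The rest after removing the top digit. -/
def rst (a b k : ℕ) (n : ℤ) : ℤ := (n - dgt a b k n * (b : ℤ) ^ k) / a

/-- `Good a b k n` iff iterated digit extraction ends with a nonnegative value. -/
def Good (a b : ℕ) : ℕ → ℤ → Prop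
  | 0, n => 0 ≤ n
  | k+1, n => Good a b k (rst a b (k+1) n)

variable {a b : ℕ}

lemma dgt_lt (ha : 2 ≤ a) (k : ℕ) (n : ℤ) : dgt a b k n < a := by
  haveI : NeZero a := ⟨by omega⟩
  exact ZMod.val_lt _

lemma dvd_sub_dgt (ha : 2 ≤ a) (hab : Nat.Coprime a b) (k : ℕ) (n : ℤ) :
    (a : ℤ) ∣ n - dgt a b k n * (b : ℤ) ^ k := by
  haveI : NeZero a := ⟨by omega⟩
  rw [← ZMod.intCast_zmod_eq_zero_iff_dvd]
  push_cast
  rw [dgt, ZMod.natCast_val, ZMod.cast_id]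
  have hbu : (b : ZMod a) * (b : ZMod a)⁻¹ = 1 :=
    ZMod.coe_mul_inv_eq_one b (Nat.Coprime.symm hab)
  have h1 : ((b : ZMod a)⁻¹) ^ k * (b : ZMod a) ^ k = 1 := by
    rw [← mul_pow, mul_comm ((b : ZMod a)⁻¹), hbu, one_pow]
  calc (n : ZMod a) - (n : ZMod a) * ((b : ZMod a)⁻¹) ^ k * (b : ZMod a) ^ k
      = (n : ZMod a) - (n : ZMod a) * (((b : ZMod a)⁻¹) ^ k * (b : ZMod a) ^ k) := by ring
    _ = 0 := by rw [h1, mul_one, sub_self]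

lemma eq_dgt_rst (ha : 2 ≤ a) (hab : Nat.Coprime a b) (k : ℕ) (n : ℤ) :
    n = a * rst a b k n + dgt a b k n * (b : ℤ) ^ k := by
  have h := dvd_sub_dgt ha hab k n
  rw [rst, Int.mul_ediv_cancel' h]
  ring

lemma dgt_rst_unique (ha : 2 ≤ a) (hab : Nat.Coprime a b) {k : ℕ} {n m : ℤ} {c : ℕ}
    (hc : c < a) (h : n = a * m + c * (b : ℤ) ^ k) :
    dgt a b k n = c ∧ rst a b k n = m := by
  haveI : NeZero a := ⟨by omega⟩
  have hbu : (b : ZMod a) * (b : ZMod a)⁻¹ = 1 :=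
    ZMod.coe_mul_inv_eq_one b (Nat.Coprime.symm hab)
  have hd : dgt a b k n = c := by
    have h2 : ((n : ZMod a) * ((b : ZMod a)⁻¹) ^ k) = (c : ZMod a) := by
      have h3 : ((n : ZMod a)) = (c : ZMod a) * (b : ZMod a) ^ k := by
        have h4 := congrArg (fun z : ℤ => (z : ZMod a)) h
        push_cast at h4
        simpa [ZMod.natCast_self] using h4
      rw [h3, mul_assoc, ← mul_pow, hbu, one_pow, mul_one]
    rw [dgt, h2, ZMod.val_cast_of_lt hc]
  refine ⟨hd, ?_⟩
  have ha0 : (a : ℤ) ≠ 0 := by exact_mod_cast (by omega : a ≠ 0)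
  rw [rst, hd, h, show (a : ℤ) * m + c * (b:ℤ) ^ k - c * (b:ℤ) ^ k = a * m by ring,
    Int.mul_ediv_cancel_left _ ha0]

lemma good_succ_of (ha : 2 ≤ a) (hab : Nat.Coprime a b) {k : ℕ} {n m : ℤ} {c : ℕ}
    (hc : c < a) (h : n = a * m + c * (b : ℤ) ^ (k+1)) (hm : Good a b k m) :
    Good a b (k+1) n := by
  show Good a b k (rst a b (k+1) n)
  rw [(dgt_rst_unique ha hab hc h).2]
  exact hm

lemma not_good_succ (ha : 2 ≤ a) (hab : Nat.Coprime a b) {k : ℕ} {n m : ℤ} {c : ℕ}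
    (hc : c < a) (h : n = a * m + c * (b : ℤ) ^ (k+1)) (hm : ¬ Good a b k m) :
    ¬ Good a b (k+1) n := by
  intro hg
  have hg' : Good a b k (rst a b (k+1) n) := hg
  rw [(dgt_rst_unique ha hab hc h).2] at hg'
  exact hm hg'

lemma good_zero (ha : 2 ≤ a) (hab : Nat.Coprime a b) : ∀ k, Good a b k 0 := by
  intro k
  induction k with
  | zero => exact le_refl 0
  | succ k ih =>
    exact good_succ_of ha hab (c := 0) (by omega) (by push_cast; ring) ih

lemma gen_good (ha : 2 ≤ a) (hab : Nat.Coprime a b) :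
    ∀ k, ∀ i ≤ k, Good a b k ((a : ℤ) ^ (k - i) * (b : ℤ) ^ i) := by
  intro k
  induction k with
  | zero =>
    intro i hi
    interval_cases i
    show (0:ℤ) ≤ _
    norm_num
  | succ k ih =>
    intro i hi
    rcases Nat.lt_or_ge i (k+1) with h | h
    · have hik : i ≤ k := by omega
      have hpow : (a : ℤ) ^ (k + 1 - i) = a * (a : ℤ) ^ (k - i) := by
        rw [show k + 1 - i = (k - i) + 1 by omega, pow_succ]; ring
      exact good_succ_of ha hab (c := 0)
        (by omega) (by rw [hpow]; push_cast; ring) (ih i hik)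
    · have hik : i = k + 1 := by omega
      subst hik
      refine good_succ_of ha hab (c := 1) (by omega) ?_ (good_zero ha hab k)
      simp

lemma add_good (ha : 2 ≤ a) (hab : Nat.Coprime a b) :
    ∀ k, ∀ n n' : ℤ, Good a b k n → Good a b k n' → Good a b k (n + n') := by
  intro k
  induction k with
  | zero => intro n n' hn hn'; exact add_nonneg hn hn'
  | succ k ih =>
    have hsmul : ∀ (c : ℕ) (x : ℤ), Good a b k x → Good a b k (c * x) := by
      intro c
      induction c with
      | zero => intro x _; simpa using good_zero ha hab k
      | succ c ihc =>
        intro x hx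
        have h5 := ih (c * x) x (ihc x hx) hx
        have h6 : ((c + 1 : ℕ) : ℤ) * x = c * x + x := by push_cast; ring
        rw [h6]
        exact h5
    intro n n' hn hn'
    set c := dgt a b (k+1) n with hcdef
    set c' := dgt a b (k+1) n' with hcdef'
    set r := rst a b (k+1) n with hrdef
    set r' := rst a b (k+1) n' with hrdef'
    have hrep : n = a * r + c * (b:ℤ) ^ (k+1) := eq_dgt_rst ha hab (k+1) n
    have hrep' : n' = a * r' + c' * (b:ℤ) ^ (k+1) := eq_dgt_rst ha hab (k+1) n'
    have hgr : Good a b k r := hn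
    have hgr' : Good a b k r' := hn'
    clear_value c c' r r'
    rcases Nat.lt_or_ge (c + c') a with hlt | hge
    · refine good_succ_of ha hab (c := c + c') hlt ?_ (ih _ _ hgr hgr')
      push_cast
      rw [hrep, hrep']; ring
    · have hca : c + c' - a < a := by
        have h7 := dgt_lt (b := b) ha (k+1) n
        have h8 := dgt_lt (b := b) ha (k+1) n'
        omega
      have hbk : Good a b k ((b:ℤ) ^ (k+1)) := by
        have h9 := hsmul b ((a:ℤ) ^ (k - k) * (b:ℤ) ^ k) (gen_good ha hab k k le_rfl)
        have h10 : (b:ℤ) * ((a:ℤ) ^ (k - k) * (b:ℤ) ^ k) = (b:ℤ) ^ (k+1) := by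
          rw [Nat.sub_self, pow_zero, one_mul, pow_succ]; ring
        rwa [h10] at h9
      have hm : Good a b k (r + r' + (b:ℤ) ^ (k+1)) :=
        ih _ _ (ih _ _ hgr hgr') hbk
      refine good_succ_of ha hab (c := c + c' - a) hca ?_ hm
      have hcst : ((c + c' - a : ℕ) : ℤ) = (c : ℤ) + c' - a := by
        rw [Nat.cast_sub hge]; push_cast; ring
      rw [hcst, hrep, hrep']; ring

lemma mem_good (ha : 2 ≤ a) (hab : Nat.Coprime a b) {k : ℕ} {n : ℕ}
    (hn : n ∈ S a b k) : Good a b k (n : ℤ) := by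
  induction hn using AddSubmonoid.closure_induction with
  | mem x hx =>
    obtain ⟨i, hi, rfl⟩ := hx
    push_cast
    exact gen_good ha hab k i hi
  | zero => simpa using good_zero ha hab k
  | add x y _ _ hx hy => push_cast; exact add_good ha hab k _ _ hx hy

/-- The Frobenius number as an integer. -/
def Fz (a b k : ℕ) : ℤ := ((a : ℤ) - 1) * (sigma a b k : ℤ) - (a : ℤ) ^ (k+1)

lemma sigma_succ (k : ℕ) : sigma a b (k+1) = a * sigma a b k + b ^ (k+1) := by
  unfold sigma
  rw [Finset.sum_range_succ (n := k+1), Finset.mul_sum]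
  have h : ∀ i ∈ Finset.range (k+1), a ^ (k + 1 - i) * b ^ i = a * (a ^ (k - i) * b ^ i) := by
    intro i hi
    rw [Finset.mem_range] at hi
    rw [show k + 1 - i = (k - i) + 1 by omega, pow_succ]
    ring
  rw [Finset.sum_congr rfl h, Nat.sub_self, pow_zero, one_mul, add_comm]

lemma sigma_zero : sigma a b 0 = 1 := by simp [sigma]

lemma Fz_zero : Fz a b 0 = -1 := by
  rw [Fz, sigma_zero]
  push_cast
  ring

lemma Fz_succ (k : ℕ) : Fz a b (k+1) = a * Fz a b k + ((a : ℤ) - 1) * (b:ℤ) ^ (k+1) := by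
  unfold Fz
  rw [sigma_succ]
  push_cast
  ring

lemma not_good_Fz (ha : 2 ≤ a) (hab : Nat.Coprime a b) : ∀ k, ¬ Good a b k (Fz a b k) := by
  intro k
  induction k with
  | zero =>
    show ¬ (0 : ℤ) ≤ Fz a b 0
    rw [Fz_zero]
    omega
  | succ k ih =>
    refine not_good_succ ha hab (c := a - 1) (by omega) ?_ ih
    rw [Fz_succ, Nat.cast_sub (by omega : 1 ≤ a), Nat.cast_one]

lemma neg_one_le_Fz (ha : 2 ≤ a) (hb : 2 ≤ b) : ∀ k, -1 ≤ Fz a b k := by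
  intro k
  induction k with
  | zero => rw [Fz_zero]
  | succ k ih =>
    rw [Fz_succ]
    have hb2 : (2 : ℤ) ≤ (b:ℤ) ^ (k+1) := by
      calc (2:ℤ) ≤ (b:ℤ) := by exact_mod_cast hb
        _ ≤ (b:ℤ) ^ (k+1) := le_self_pow₀ (by exact_mod_cast (by omega : 1 ≤ b)) (by omega)
    have ha1 : (2 : ℤ) ≤ (a:ℤ) := by exact_mod_cast ha
    nlinarith

lemma mul_mem_S {k : ℕ} {m : ℕ} (hm : m ∈ S a b k) : a * m ∈ S a b (k+1) := by
  induction hm using AddSubmonoid.closure_induction with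
  | mem x hx =>
    obtain ⟨i, hi, rfl⟩ := hx
    apply AddSubmonoid.subset_closure
    exact ⟨i, by omega, by rw [show k + 1 - i = (k - i) + 1 by omega, pow_succ]; ring⟩
  | zero => simpa using (S a b (k+1)).zero_mem
  | add x y _ _ hx hy =>
    rw [mul_add]
    exact (S a b (k+1)).add_mem hx hy

lemma lt_mem_S (ha : 2 ≤ a) (hb : 2 ≤ b) (hab : Nat.Coprime a b) :
    ∀ k, ∀ n : ℕ, Fz a b k < (n : ℤ) → n ∈ S a b k := by
  intro k
  induction k with
  | zero =>
    intro n _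
    have h1 : (1 : ℕ) ∈ S a b 0 := AddSubmonoid.subset_closure ⟨0, le_rfl, by simp⟩
    have h2 := AddSubmonoid.nsmul_mem (S a b 0) h1 n
    simpa using h2
  | succ k ih =>
    intro n hn
    set c := dgt a b (k+1) (n : ℤ) with hc
    set r := rst a b (k+1) (n : ℤ) with hrd
    have hrep : (n : ℤ) = a * r + c * (b:ℤ) ^ (k+1) := eq_dgt_rst ha hab (k+1) n
    have hclt : c < a := dgt_lt ha (k+1) n
    have hbpos : (0:ℤ) < (b:ℤ) ^ (k+1) := by
      have : (0:ℤ) < (b:ℤ) := by exact_mod_cast (by omega : 0 < b)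
      positivity
    have hrgt : Fz a b k < r := by
      have h1 : (a:ℤ) * Fz a b k < a * r := by
        have h2 : (a:ℤ) * r = n - c * (b:ℤ)^(k+1) := by rw [hrep]; ring
        rw [h2]
        have hcle : (c : ℤ) ≤ (a:ℤ) - 1 := by
          have : (c:ℤ) < a := by exact_mod_cast hclt
          omega
        have h3 := Fz_succ (a := a) (b := b) k
        nlinarith
      exact lt_of_mul_lt_mul_left h1 (by positivity)
    have hr0 : 0 ≤ r := by have h6 := neg_one_le_Fz ha hb k; omega
    set m := r.toNat with hm
    have hmr : (m : ℤ) = r := Int.toNat_of_nonneg hr0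
    have hmem : m ∈ S a b k := ih m (by rw [hmr]; exact hrgt)
    have hnat : n = a * m + c * b ^ (k+1) := by
      have h4 : (n : ℤ) = ((a * m + c * b ^ (k+1) : ℕ) : ℤ) := by
        push_cast
        rw [hmr]
        exact hrep
      exact_mod_cast h4
    rw [hnat]
    refine (S a b (k+1)).add_mem (mul_mem_S hmem) ?_
    have hgen : b ^ (k+1) ∈ S a b (k+1) :=
      AddSubmonoid.subset_closure ⟨k+1, le_rfl, by simp⟩
    have h5 := AddSubmonoid.nsmul_mem (S a b (k+1)) hgen c
    simpa [smul_eq_mul] using h5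

lemma key_ineq (ha : 2 ≤ a) (hb : 2 ≤ b) (k : ℕ) (hk : 1 ≤ k) :
    a ^ (k+1) + sigma a b k ≤ a * sigma a b k := by
  induction k with
  | zero => omega
  | succ k ih =>
    rcases Nat.eq_zero_or_pos k with rfl | hk0
    · have h1 : sigma a b 1 = a + b := by
        simp [sigma, Finset.sum_range_succ]
      rw [h1]
      have h2 : 2 * b ≤ a * b := Nat.mul_le_mul_right b ha
      have h3 : 2 * a ≤ b * a := Nat.mul_le_mul_right a hb
      have h4 : a ^ (0 + 1 + 1) = a * a := by ring
      nlinarith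
    · have hih := ih hk0
      rw [sigma_succ]
      have h2 : a ^ (k + 1 + 1) = a * a ^ (k+1) := by ring
      have h3 := Nat.mul_le_mul_left a hih
      have h4 : b ^ (k+1) ≤ a * b ^ (k+1) := Nat.le_mul_of_pos_left _ (by omega)
      nlinarith

end TripAux

theorem frobenius_geometric_tripathi (a b k : ℕ) (ha : 2 ≤ a) (hb : 2 ≤ b)
    (hab : Nat.Coprime a b) (hk : 1 ≤ k) :
    IsGreatest
      {n : ℕ | n ∉ AddSubmonoid.closure {x : ℕ | ∃ i ≤ k, x = a ^ (k - i) * b ^ i}}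
      (sigma a b (k + 1) - sigma a b k - (a ^ (k + 1) + b ^ (k + 1))) := by
  have hkey := TripAux.key_ineq ha hb k hk
  have h1 : sigma a b k + (a ^ (k+1) + b ^ (k+1)) ≤ sigma a b (k+1) := by
    rw [TripAux.sigma_succ]
    omega
  have hcast : ((sigma a b (k + 1) - sigma a b k - (a ^ (k + 1) + b ^ (k + 1)) : ℕ) : ℤ)
      = TripAux.Fz a b k := by
    rw [Nat.sub_sub, Nat.cast_sub h1, TripAux.sigma_succ, TripAux.Fz]
    push_cast
    ring
  constructor
  · intro hmem
    exact TripAux.not_good_Fz ha hab k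
      (hcast ▸ TripAux.mem_good ha hab (hmem : _ ∈ TripAux.S a b k))
  · intro n hn
    by_contra h
    push_neg at h
    refine hn (TripAux.lt_mem_S ha hb hab k n ?_)
    rw [← hcast]
    exact_mod_cast h
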